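/- (Theorem 6.1) There exist constants C > 0 and κ₀ > 0 such that for every κ ≥ κ₀ and every t ≥ 0, ‖e_{H,κ}(t) − e^{−κt} e₀‖₂ ≤ C/κ; that is, the high-frequency system error satisfies e_H(t, κ) = e^{−κt} e_H(0) + O(κ^{−1}) uniformly in t ≥ 0 for sufficiently large κ. -/

import Mathlib

open Matrix Filter

noncomputable section

/-- Euclidean norm ‖·‖₂ of a vector. -/
def norm2 {n : ℕ} (v : Fin n → ℝ) : ℝ := Real.sqrt (∑ i, v i ^ 2)

/-- Supremum (infinity) norm ‖·‖_∞ of a vector (the sup norm on `Fin n → ℝ`). -/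
def normInf {n : ℕ} (v : Fin n → ℝ) : ℝ := ‖v‖

/-- Frobenius norm ‖·‖_F of a matrix. -/
def normF {N m : ℕ} (W : Matrix (Fin N) (Fin m) ℝ) : ℝ := Real.sqrt (∑ i, ∑ j, W i j ^ 2)

/-- Smallest eigenvalue λ_min of a real symmetric (Hermitian) matrix. -/
def lamMin {n : ℕ} {A : Matrix (Fin n) (Fin n) ℝ} (hA : A.IsHermitian) : ℝ := ⨅ i, hA.eigenvalues i

/-- Largest eigenvalue λ_max of a real symmetric (Hermitian) matrix. -/
def lamMax {n : ℕ} {A : Matrix (Fin n) (Fin n) ℝ} (hA : A.IsHermitian) : ℝ := ⨆ i, hA.eigenvalues i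

/-- A real square matrix is Hurwitz if every (complex) eigenvalue has negative real part. -/
def Hurwitz {n : ℕ} (A : Matrix (Fin n) (Fin n) ℝ) : Prop :=
  ∀ μ : ℂ, (A.map Complex.ofReal).charpoly.IsRoot μ → μ.re < 0

/-- The Lyapunov function V(e, W̃) = eᵀ P e + γ⁻¹ tr((W̃ Λ^{1/2})ᵀ (W̃ Λ^{1/2})). -/
def Vlyap {n N m : ℕ} (γ : ℝ) (P : Matrix (Fin n) (Fin n) ℝ)
    (Lhalf : Matrix (Fin m) (Fin m) ℝ) (e : Fin n → ℝ) (W : Matrix (Fin N) (Fin m) ℝ) : ℝ :=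
  e ⬝ᵥ (P *ᵥ e) + γ⁻¹ * ((W * Lhalf)ᵀ * (W * Lhalf)).trace

/-- The augmented Lyapunov function V* of Theorem 5.1. -/
def Vstar {n N m : ℕ} (γ κ η ξ : ℝ) (P R : Matrix (Fin n) (Fin n) ℝ)
    (hP : P.IsHermitian) (hR : R.IsHermitian)
    (Lhalf : Matrix (Fin m) (Fin m) ℝ)
    (e : Fin n → ℝ) (W : Matrix (Fin N) (Fin m) ℝ) (eL xt : Fin n → ℝ) : ℝ :=
  Vlyap γ P Lhalf e W + η⁻¹ * κ * (eL ⬝ᵥ (P *ᵥ eL))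
    + 2 * ξ * κ⁻¹ * (lamMax hP)⁻¹ * lamMin hR * (xt ⬝ᵥ (P *ᵥ xt))

lemma norm2_nonneg' {n : ℕ} (v : Fin n → ℝ) : 0 ≤ norm2 v := Real.sqrt_nonneg _

lemma norm2_sq {n : ℕ} (v : Fin n → ℝ) : norm2 v ^ 2 = ∑ i, v i ^ 2 :=
  Real.sq_sqrt (Finset.sum_nonneg fun i _ => sq_nonneg _)

lemma abs_dot_le {n : ℕ} (v w : Fin n → ℝ) : |v ⬝ᵥ w| ≤ norm2 v * norm2 w := by
  have h := Finset.sum_mul_sq_le_sq_mul_sq Finset.univ v w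
  have h1 : |v ⬝ᵥ w| = Real.sqrt ((∑ i, v i * w i) ^ 2) := by
    rw [Real.sqrt_sq_eq_abs]; rfl
  rw [h1]
  calc Real.sqrt ((∑ i, v i * w i) ^ 2)
      ≤ Real.sqrt ((∑ i, v i ^ 2) * ∑ i, w i ^ 2) := Real.sqrt_le_sqrt h
    _ = norm2 v * norm2 w := Real.sqrt_mul (by positivity) _

lemma dot_le {n : ℕ} (v w : Fin n → ℝ) : v ⬝ᵥ w ≤ norm2 v * norm2 w :=
  le_trans (le_abs_self _) (abs_dot_le v w)

lemma neg_dot_le {n : ℕ} (v w : Fin n → ℝ) : -(v ⬝ᵥ w) ≤ norm2 v * norm2 w :=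
  le_trans (neg_le_abs _) (abs_dot_le v w)

lemma norm2_mulVec_le {n : ℕ} (A : Matrix (Fin n) (Fin n) ℝ) (v : Fin n → ℝ) :
    norm2 (A *ᵥ v) ≤ normF A * norm2 v := by
  have key : ∑ i, (A *ᵥ v) i ^ 2 ≤ (∑ i, ∑ j, A i j ^ 2) * ∑ j, v j ^ 2 := by
    rw [Finset.sum_mul]
    refine Finset.sum_le_sum fun i _ => ?_
    exact Finset.sum_mul_sq_le_sq_mul_sq Finset.univ (A i) v
  calc norm2 (A *ᵥ v) = Real.sqrt (∑ i, (A *ᵥ v) i ^ 2) := rfl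
    _ ≤ Real.sqrt ((∑ i, ∑ j, A i j ^ 2) * ∑ j, v j ^ 2) := Real.sqrt_le_sqrt key
    _ = normF A * norm2 v := Real.sqrt_mul (by positivity) _

set_option maxHeartbeats 1000000 in
theorem statement11
    {n : ℕ} (hn : 0 < n)
    (Ar : Matrix (Fin n) (Fin n) ℝ) (hAr : Hurwitz Ar)
    (η : ℝ) (hη : 0 ≤ η) (e0 : Fin n → ℝ) (M : ℝ) (hM : 0 < M)
    (f e eL : ℝ → ℝ → Fin n → ℝ)
    (hfc : ∀ κ > (0:ℝ), ContinuousOn (f κ) (Set.Ici 0))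
    (hfb : ∀ κ > (0:ℝ), ∀ t ≥ (0:ℝ), norm2 (f κ t) ≤ M)
    (hei : ∀ κ > (0:ℝ), e κ 0 = e0) (heLi : ∀ κ > (0:ℝ), eL κ 0 = 0)
    (he : ∀ κ > (0:ℝ), ∀ t ≥ (0:ℝ), HasDerivAt (e κ)
          (Ar *ᵥ e κ t - f κ t - κ • (e κ t - eL κ t)) t)
    (heL : ∀ κ > (0:ℝ), ∀ t ≥ (0:ℝ), HasDerivAt (eL κ)
          (Ar *ᵥ eL κ t + η • (e κ t - eL κ t)) t)
    : ∃ C > (0:ℝ), ∃ κ₀ > (0:ℝ), ∀ κ ≥ κ₀, ∀ t ≥ (0:ℝ),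
      norm2 (e κ t - eL κ t - Real.exp (-κ * t) • e0) ≤ C / κ := by
  set NA := normF Ar with hNAdef
  have hNA0 : 0 ≤ NA := Real.sqrt_nonneg _
  set D := norm2 (Ar *ᵥ e0 - η • e0) with hDdef
  have hD0 : 0 ≤ D := norm2_nonneg' _
  set b := M + D with hbdef
  have hb : 0 < b := by linarith
  refine ⟨2 * b, by linarith, 2 * NA + 2, by linarith, ?_⟩
  intro κ hκ t ht
  have hκ0 : 0 < κ := by linarith
  set a := κ + η - NA with hadef
  have ha2 : κ / 2 + 1 ≤ a := by linarith
  have ha0 : 0 < a := by linarith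
  set g : ℝ → Fin n → ℝ := fun s => e κ s - eL κ s - Real.exp (-κ * s) • e0 with hgdef
  set g' : ℝ → Fin n → ℝ := fun s =>
    Ar *ᵥ g s - (κ + η) • g s - f κ s + Real.exp (-κ * s) • (Ar *ᵥ e0 - η • e0) with hg'def
  set φ : ℝ → ℝ := fun s => ∑ i, (g s i) ^ 2 with hφdef
  -- coordinate derivatives of g
  have hgd : ∀ s ≥ (0:ℝ), ∀ i, HasDerivAt (fun u => g u i) (g' s i) s := by
    intro s hs i
    have hE := (ContinuousLinearMap.proj (R := ℝ) (φ := fun _ : Fin n => ℝ)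
        i).hasFDerivAt.comp_hasDerivAt s (he κ hκ0 s hs)
    have hL := (ContinuousLinearMap.proj (R := ℝ) (φ := fun _ : Fin n => ℝ)
        i).hasFDerivAt.comp_hasDerivAt s (heL κ hκ0 s hs)
    have hX : HasDerivAt (fun u => Real.exp (-κ * u) * e0 i)
        (Real.exp (-κ * s) * -κ * e0 i) s := by
      have h1 : HasDerivAt (fun u : ℝ => -κ * u) (-κ) s := by
        simpa using (hasDerivAt_id s).const_mul (-κ)
      exact ((Real.hasDerivAt_exp (-κ * s)).comp s h1).mul_const (e0 i)
    have hcomb := (hE.sub hL).sub hX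
    refine hcomb.congr_deriv ?_
    · simp only [hg'def, hgdef, Matrix.mulVec_sub, Matrix.mulVec_smul, Pi.sub_apply,
        Pi.add_apply, Pi.smul_apply, smul_eq_mul, Matrix.smul_mulVec,
        ContinuousLinearMap.proj_apply]
      try ring
  -- derivative of φ
  have hφd : ∀ s ≥ (0:ℝ), HasDerivAt φ (2 * (g s ⬝ᵥ g' s)) s := by
    intro s hs
    have h : HasDerivAt (fun u => ∑ i, (g u i) ^ 2) (∑ i, 2 * g s i ^ 1 * g' s i) s :=
      HasDerivAt.fun_sum (fun i _ => (hgd s hs i).pow 2)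
    convert h using 1
    simp only [dotProduct, Finset.mul_sum]
    try exact Finset.sum_congr rfl fun i _ => by ring
  -- the key differential inequality
  set c : ℝ := b ^ 2 / a ^ 2 with hcdef
  have haac : a * (a * c) = b ^ 2 := by
    rw [hcdef]; field_simp
  have hbound : ∀ s ≥ (0:ℝ), 2 * (g s ⬝ᵥ g' s) ≤ -a * φ s + a * c := by
    intro s hs
    have hexp0 : 0 < Real.exp (-κ * s) := Real.exp_pos _
    have hexp1 : Real.exp (-κ * s) ≤ 1 := by
      apply Real.exp_le_one_iff.mpr; nlinarith
    have hsplit : g s ⬝ᵥ g' s =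
        g s ⬝ᵥ (Ar *ᵥ g s) - (κ + η) * (g s ⬝ᵥ g s) - g s ⬝ᵥ f κ s
          + Real.exp (-κ * s) * (g s ⬝ᵥ (Ar *ᵥ e0 - η • e0)) := by
      simp [hg'def, dotProduct_sub, dotProduct_add, dotProduct_smul, smul_eq_mul]
    have hvv : g s ⬝ᵥ g s = norm2 (g s) ^ 2 := by
      rw [norm2_sq]
      simp [dotProduct, sq]
    have hφsq : φ s = norm2 (g s) ^ 2 := by
      rw [norm2_sq]
      try simp [hφdef]
    have hs0 : 0 ≤ norm2 (g s) := norm2_nonneg' _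
    have h1 : g s ⬝ᵥ (Ar *ᵥ g s) ≤ NA * norm2 (g s) ^ 2 := by
      calc g s ⬝ᵥ (Ar *ᵥ g s) ≤ norm2 (g s) * norm2 (Ar *ᵥ g s) := dot_le _ _
        _ ≤ norm2 (g s) * (NA * norm2 (g s)) :=
            mul_le_mul_of_nonneg_left (norm2_mulVec_le _ _) hs0
        _ = NA * norm2 (g s) ^ 2 := by ring
    have h2 : -(g s ⬝ᵥ f κ s) ≤ norm2 (g s) * M := by
      calc -(g s ⬝ᵥ f κ s) ≤ norm2 (g s) * norm2 (f κ s) := neg_dot_le _ _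
        _ ≤ norm2 (g s) * M := mul_le_mul_of_nonneg_left (hfb κ hκ0 s hs) hs0
    have h3 : Real.exp (-κ * s) * (g s ⬝ᵥ (Ar *ᵥ e0 - η • e0)) ≤ norm2 (g s) * D := by
      have hd : g s ⬝ᵥ (Ar *ᵥ e0 - η • e0) ≤ norm2 (g s) * D := dot_le _ _
      have hDD : 0 ≤ norm2 (g s) * D := mul_nonneg hs0 hD0
      nlinarith [mul_le_mul_of_nonneg_left hd hexp0.le]
    have key : 2 * (g s ⬝ᵥ g' s) ≤ -2 * a * norm2 (g s) ^ 2 + 2 * b * norm2 (g s) := by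
      rw [hsplit, hvv]; nlinarith
    have h4 : -a * norm2 (g s) ^ 2 + 2 * b * norm2 (g s) ≤ a * c := by
      nlinarith [sq_nonneg (a * norm2 (g s) - b), haac, ha0, mul_pos ha0 ha0]
    rw [hφsq]
    nlinarith [key, h4]
  -- the auxiliary function ψ
  set ψ : ℝ → ℝ := fun s => Real.exp (a * s) * (φ s - c) with hψdef
  have hψd : ∀ s ≥ (0:ℝ), HasDerivAt ψ
      (Real.exp (a * s) * a * (φ s - c) + Real.exp (a * s) * (2 * (g s ⬝ᵥ g' s))) s := by
    intro s hs
    have h1 : HasDerivAt (fun u : ℝ => Real.exp (a * u)) (Real.exp (a * s) * a) s := by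
      have : HasDerivAt (fun u : ℝ => a * u) a s := by
        simpa using (hasDerivAt_id s).const_mul a
      exact (Real.hasDerivAt_exp (a * s)).comp s this
    have h2 : HasDerivAt (fun u => φ u - c) (2 * (g s ⬝ᵥ g' s)) s :=
      (hφd s hs).sub_const c
    exact h1.mul h2
  have hanti : AntitoneOn ψ (Set.Ici 0) := by
    apply antitoneOn_of_deriv_nonpos (convex_Ici 0)
    · intro s hs
      exact ((hψd s hs).continuousAt).continuousWithinAt
    · intro s hs
      rw [interior_Ici] at hs
      exact (hψd s (le_of_lt hs)).differentiableAt.differentiableWithinAt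
    · intro s hs
      rw [interior_Ici] at hs
      rw [(hψd s (le_of_lt hs)).deriv]
      have hb1 := hbound s (le_of_lt hs)
      have he1 : 0 < Real.exp (a * s) := Real.exp_pos _
      have h5 : Real.exp (a * s) * (2 * (g s ⬝ᵥ g' s))
          ≤ Real.exp (a * s) * (-a * φ s + a * c) :=
        mul_le_mul_of_nonneg_left hb1 he1.le
      nlinarith [h5]
  have hφ0 : φ 0 = 0 := by
    have hg0 : ∀ i, g 0 i = 0 := by
      intro i
      simp [hgdef, hei κ hκ0, heLi κ hκ0, smul_eq_mul]
    simp [hφdef, hg0]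
  have hψt := hanti (Set.self_mem_Ici) (Set.mem_Ici.mpr ht) ht
  have hψ0 : ψ 0 = -c := by simp [hψdef, hφ0]
  have hc0 : 0 ≤ c := div_nonneg (sq_nonneg b) (sq_nonneg a)
  have hφt : φ t ≤ c := by
    rw [hψ0] at hψt
    have hψt2 : Real.exp (a * t) * (φ t - c) ≤ -c := hψt
    have he1 : 0 < Real.exp (a * t) := Real.exp_pos _
    nlinarith [hψt2, he1, hc0]
  -- conclude
  have hba0 : 0 ≤ b / a := le_of_lt (div_pos hb ha0)
  have hfin : norm2 (g t) ≤ b / a := by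
    have h1 : norm2 (g t) = Real.sqrt (φ t) := by rw [hφdef]; rfl
    have h2 : φ t ≤ (b / a) ^ 2 := by
      rw [div_pow]; exact hφt
    rw [h1]
    calc Real.sqrt (φ t) ≤ Real.sqrt ((b / a) ^ 2) := Real.sqrt_le_sqrt h2
      _ = b / a := Real.sqrt_sq hba0
  have hlast : b / a ≤ 2 * b / κ := by
    rw [div_le_div_iff₀ ha0 hκ0]
    nlinarith
  have hEq : e κ t - eL κ t - Real.exp (-κ * t) • e0 = g t := by rw [hgdef]
  rw [hEq]
  exact le_trans hfin hlast
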